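/- Let (H, ·, ∘) be a Hopf brace. Then for all g, h ∈ H one has S(g₍₁₎∘h)·g₍₂₎ = S(g₍₁₎)·(g₍₂₎∘S(h)), where S is the antipode of (H, ·). -/

import Mathlib

open scoped TensorProduct
open Coalgebra

variable (R H : Type*) [CommRing R] [AddCommGroup H] [Module R H] [Coalgebra R H]

/-- A Hopf algebra structure (multiplication, unit, antipode) on the coalgebra `H`:
the multiplication is associative with unit, comultiplication and counit are algebra
maps, and `S` is an antipode (expressed via arbitrary Sweedler representations). -/
structure HopfMul where
  mul : H →ₗ[R] H →ₗ[R] H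
  one : H
  S : H →ₗ[R] H
  mul_assoc : ∀ a b c : H, mul (mul a b) c = mul a (mul b c)
  one_mul : ∀ a : H, mul one a = a
  mul_one : ∀ a : H, mul a one = a
  comul_mul : ∀ (a b : H) {ιa : Type*} {ιb : Type*} (ra : Coalgebra.Repr R a ιa)
      (rb : Coalgebra.Repr R b ιb),
    comul (R := R) (mul a b) = ∑ i ∈ ra.index, ∑ j ∈ rb.index,
      mul (ra.left i) (rb.left j) ⊗ₜ[R] mul (ra.right i) (rb.right j)
  comul_one : comul (R := R) one = one ⊗ₜ[R] one
  counit_mul : ∀ a b : H, counit (R := R) (mul a b) = counit (R := R) a * counit (R := R) b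
  counit_one : counit (R := R) one = 1
  S_mul_left : ∀ (a : H) {ι : Type*} (r : Coalgebra.Repr R a ι),
    ∑ i ∈ r.index, mul (S (r.left i)) (r.right i) = counit (R := R) a • one
  S_mul_right : ∀ (a : H) {ι : Type*} (r : Coalgebra.Repr R a ι),
    ∑ i ∈ r.index, mul (r.left i) (S (r.right i)) = counit (R := R) a • one

universe d₁ d₂ d₃ d₄ c₁ c₂ c₃ c₄

/-- A Hopf brace: two Hopf algebra structures `dot` (written `·`) and `circ` (written `∘`)
on the same coalgebra `H`, satisfying `g∘(h·ℓ) = (g₍₁₎∘h)·S(g₍₂₎)·(g₍₃₎∘ℓ)`. -/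
structure HopfBrace where
  dot : HopfMul.{_, _, d₁, d₂, d₃, d₄} R H
  circ : HopfMul.{_, _, c₁, c₂, c₃, c₄} R H
  compat : ∀ (g h ℓ : H) {ι : Type*} (r : Coalgebra.Repr R g ι) {κ : ι → Type*}
      (r2 : ∀ i : ι, Coalgebra.Repr R (r.right i) (κ i)),
    circ.mul g (dot.mul h ℓ) = ∑ i ∈ r.index, ∑ j ∈ (r2 i).index,
      dot.mul (dot.mul (circ.mul (r.left i) h) (dot.S ((r2 i).left j)))
        (circ.mul ((r2 i).right j) ℓ)

/-! ### Auxiliary convolution machinery -/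

namespace HopfBraceAux

noncomputable section

universe v

variable {S A E : Type*} [CommRing S] [AddCommGroup A] [Module S A] [Coalgebra S A]
  [AddCommGroup E] [Module S E]

/-- Reindex a Sweedler representation so that its index type lives in an
arbitrary universe. -/
def reRepr {x : A} {ι : Type*} (rep : Coalgebra.Repr S x ι) :
    Coalgebra.Repr S x (ULift.{v} (Fin rep.index.card)) where
  index := Finset.univ
  left := fun i => rep.left (rep.index.equivFin.symm i.down)
  right := fun i => rep.right (rep.index.equivFin.symm i.down)
  eq := by
    rw [← rep.eq, ← Finset.sum_coe_sort rep.index]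
    exact Fintype.sum_equiv (Equiv.ulift.trans rep.index.equivFin.symm) _ _ (fun i => rfl)

/-- The map back from the reindexed representation's indices to the original ones. -/
def reReprIdx {x : A} {ι : Type*} (rep : Coalgebra.Repr S x ι) :
    ULift.{v} (Fin rep.index.card) → ι :=
  fun i => rep.index.equivFin.symm i.down

lemma reRepr_sum_dep {β : Type*} [AddCommMonoid β] {x : A} {ι : Type*} (rep : Coalgebra.Repr S x ι)
    (f : ι → β) :
    ∑ i ∈ (reRepr.{v} rep).index, f (reReprIdx rep i) = ∑ i ∈ rep.index, f i := by
  rw [← Finset.sum_coe_sort rep.index]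
  exact Fintype.sum_equiv (Equiv.ulift.trans rep.index.equivFin.symm) _ _ (fun i => rfl)

lemma reRepr_sum {β : Type*} [AddCommMonoid β] {x : A} {ι : Type*} (rep : Coalgebra.Repr S x ι)
    (f : A → A → β) :
    ∑ i ∈ (reRepr.{v} rep).index, f ((reRepr.{v} rep).left i) ((reRepr.{v} rep).right i)
      = ∑ i ∈ rep.index, f (rep.left i) (rep.right i) :=
  reRepr_sum_dep rep (fun i => f (rep.left i) (rep.right i))

/-- Convolution of two linear maps from a coalgebra to a module with a bilinear product. -/
def conv (μ : E →ₗ[S] E →ₗ[S] E) (f g : A →ₗ[S] E) : A →ₗ[S] E :=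
  TensorProduct.lift μ ∘ₗ TensorProduct.map f g ∘ₗ comul

lemma conv_apply (μ : E →ₗ[S] E →ₗ[S] E) (f g : A →ₗ[S] E) (x : A) {ι : Type*}
    (rep : Coalgebra.Repr S x ι) :
    conv μ f g x = ∑ i ∈ rep.index, μ (f (rep.left i)) (g (rep.right i)) := by
  simp only [conv, LinearMap.comp_apply, ← rep.eq, map_sum, TensorProduct.map_tmul,
    TensorProduct.lift.tmul]

lemma sweedler_apply (Ψ : A →ₗ[S] A →ₗ[S] E) (x : A) {ι : Type*} (rep : Coalgebra.Repr S x ι) :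
    (TensorProduct.lift Ψ ∘ₗ comul) x = ∑ i ∈ rep.index, Ψ (rep.left i) (rep.right i) := by
  simp only [LinearMap.comp_apply, ← rep.eq, map_sum, TensorProduct.lift.tmul]

lemma collapse_left (φ : A →ₗ[S] E) (x : A) {ι : Type*} (rep : Coalgebra.Repr S x ι) :
    ∑ i ∈ rep.index, counit (R := S) (rep.left i) • φ (rep.right i) = φ x := by
  have h := congrArg (fun t => (TensorProduct.lid S E)
      (TensorProduct.map (LinearMap.id (R := S) (M := S)) φ t))
    (Coalgebra.sum_counit_tmul_eq (R := S) rep)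
  simp only [map_sum, TensorProduct.map_tmul, LinearMap.id_coe, id_eq,
    TensorProduct.lid_tmul, one_smul] at h
  exact h

lemma collapse_right (φ : A →ₗ[S] E) (x : A) {ι : Type*} (rep : Coalgebra.Repr S x ι) :
    ∑ i ∈ rep.index, counit (R := S) (rep.right i) • φ (rep.left i) = φ x := by
  have h := congrArg (fun t => (TensorProduct.rid S E)
      (TensorProduct.map φ (LinearMap.id (R := S) (M := S)) t))
    (Coalgebra.sum_tmul_counit_eq (R := S) rep)
  simp only [map_sum, TensorProduct.map_tmul, LinearMap.id_coe, id_eq,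
    TensorProduct.rid_tmul, one_smul] at h
  exact h

lemma conv_assoc (μ : E →ₗ[S] E →ₗ[S] E)
    (hμ : ∀ a b c : E, μ (μ a b) c = μ a (μ b c)) (f g k : A →ₗ[S] E) :
    conv μ (conv μ f g) k = conv μ f (conv μ g k) := by
  set L := TensorProduct.lift μ with hL
  have hmul : L ∘ₗ L.rTensor E =
      (L ∘ₗ L.lTensor E) ∘ₗ (TensorProduct.assoc S E E E).toLinearMap := by
    apply TensorProduct.ext_threefold
    intro a b c
    simp [hL, hμ]
  have fact1 : TensorProduct.map (conv μ f g) k =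
      L.rTensor E ∘ₗ TensorProduct.map (TensorProduct.map f g) k ∘ₗ
        (comul (R := S)).rTensor A := by
    apply TensorProduct.ext'
    intro a b
    simp [conv, hL]
  have fact2 : TensorProduct.map f (conv μ g k) =
      L.lTensor E ∘ₗ TensorProduct.map f (TensorProduct.map g k) ∘ₗ
        (comul (R := S)).lTensor A := by
    apply TensorProduct.ext'
    intro a b
    simp [conv, hL]
  have e1 : conv μ (conv μ f g) k =
      L ∘ₗ (L.rTensor E ∘ₗ TensorProduct.map (TensorProduct.map f g) k ∘ₗ
        (comul (R := S)).rTensor A) ∘ₗ comul := by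
    show L ∘ₗ TensorProduct.map (conv μ f g) k ∘ₗ comul = _
    rw [fact1]
  have e2 : conv μ f (conv μ g k) =
      L ∘ₗ (L.lTensor E ∘ₗ TensorProduct.map f (TensorProduct.map g k) ∘ₗ
        (comul (R := S)).lTensor A) ∘ₗ comul := by
    show L ∘ₗ TensorProduct.map f (conv μ g k) ∘ₗ comul = _
    rw [fact2]
  rw [e1, e2]
  ext x
  simp only [LinearMap.comp_apply]
  rw [← Coalgebra.coassoc_apply, TensorProduct.map_map_assoc]
  have h3 := LinearMap.congr_fun hmul
    (TensorProduct.map (TensorProduct.map f g) k ((comul (R := S)).rTensor A (comul x)))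
  simp only [LinearMap.comp_apply] at h3
  exact h3

lemma conv_unit_left (μ : E →ₗ[S] E →ₗ[S] E) (e : E) (he : ∀ x : E, μ e x = x)
    (f : A →ₗ[S] E) : conv μ ((counit (R := S)).smulRight e) f = f := by
  ext x
  rw [conv_apply μ _ f x (ℛ S x)]
  simp only [LinearMap.smulRight_apply, map_smul, LinearMap.smul_apply, he]
  exact collapse_left f x (ℛ S x)

end

end HopfBraceAux

open HopfBraceAux

section BraceLemmas

variable {R H}

/-- Universe-free version of `HopfMul.S_mul_left`. -/
lemma HopfMul.S_mul_left' (D : HopfMul R H) (a : H) {ι : Type*} (rep : Coalgebra.Repr R a ι) :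
    ∑ i ∈ rep.index, D.mul (D.S (rep.left i)) (rep.right i) = counit (R := R) a • D.one :=
  (reRepr_sum rep (fun x y => D.mul (D.S x) y)).symm.trans (D.S_mul_left a (reRepr rep))

/-- Universe-free version of `HopfMul.S_mul_right`. -/
lemma HopfMul.S_mul_right' (D : HopfMul R H) (a : H) {ι : Type*} (rep : Coalgebra.Repr R a ι) :
    ∑ i ∈ rep.index, D.mul (rep.left i) (D.S (rep.right i)) = counit (R := R) a • D.one :=
  (reRepr_sum rep (fun x y => D.mul x (D.S y))).symm.trans (D.S_mul_right a (reRepr rep))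

/-- Universe-free version of `HopfMul.comul_mul`. -/
lemma HopfMul.comul_mul' (D : HopfMul R H) (a b : H) {ιa ιb : Type*} (ra : Coalgebra.Repr R a ιa)
    (rb : Coalgebra.Repr R b ιb) :
    comul (R := R) (D.mul a b) = ∑ i ∈ ra.index, ∑ j ∈ rb.index,
      D.mul (ra.left i) (rb.left j) ⊗ₜ[R] D.mul (ra.right i) (rb.right j) := by
  rw [D.comul_mul a b (reRepr ra) (reRepr rb)]
  refine Eq.trans (Finset.sum_congr rfl fun i' _ => ?_)
    (reRepr_sum_dep ra (fun i => ∑ j ∈ rb.index,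
      D.mul (ra.left i) (rb.left j) ⊗ₜ[R] D.mul (ra.right i) (rb.right j)))
  exact reRepr_sum rb (fun x y =>
    D.mul ((reRepr ra).left i') x ⊗ₜ[R] D.mul ((reRepr ra).right i') y)

/-- Universe-free version of `HopfBrace.compat`. -/
lemma HopfBrace.compat' (Br : HopfBrace R H) (g h ℓ : H) {ι : Type*} (r : Coalgebra.Repr R g ι)
    {κ : ι → Type*} (r2 : ∀ i : ι, Coalgebra.Repr R (r.right i) (κ i)) :
    Br.circ.mul g (Br.dot.mul h ℓ) = ∑ i ∈ r.index, ∑ j ∈ (r2 i).index,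
      Br.dot.mul (Br.dot.mul (Br.circ.mul (r.left i) h) (Br.dot.S ((r2 i).left j)))
        (Br.circ.mul ((r2 i).right j) ℓ) := by
  rw [Br.compat g h ℓ (reRepr r) (fun i' => reRepr (r2 (reReprIdx r i')))]
  refine Eq.trans (Finset.sum_congr rfl fun i' _ => ?_)
    (reRepr_sum_dep r (fun i => ∑ j ∈ (r2 i).index,
      Br.dot.mul (Br.dot.mul (Br.circ.mul (r.left i) h) (Br.dot.S ((r2 i).left j)))
        (Br.circ.mul ((r2 i).right j) ℓ)))
  exact reRepr_sum (r2 (reReprIdx r i')) (fun x y =>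
    Br.dot.mul (Br.dot.mul (Br.circ.mul (r.left (reReprIdx r i')) h) (Br.dot.S x))
      (Br.circ.mul y ℓ))

/-- The singleton Sweedler representation of a grouplike element. -/
def singletonRepr (x : H) (hx : comul (R := R) x = x ⊗ₜ[R] x) : Coalgebra.Repr R x Unit where
  index := {()}
  left := fun _ => x
  right := fun _ => x
  eq := by simp [hx]

/-- The product Sweedler representation of `D.mul`-type products. -/
def mulRepr (D : HopfMul R H) (a b : H) {ιa ιb : Type*} (ra : Coalgebra.Repr R a ιa)
    (rb : Coalgebra.Repr R b ιb) :
    Coalgebra.Repr R (D.mul a b) (ιa × ιb) where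
  index := ra.index ×ˢ rb.index
  left := fun p => D.mul (ra.left p.1) (rb.left p.2)
  right := fun p => D.mul (ra.right p.1) (rb.right p.2)
  eq := by rw [Finset.sum_product, D.comul_mul' a b ra rb]

/-- In a Hopf brace the two units coincide. -/
lemma hopfBrace_one_eq (Br : HopfBrace R H) : Br.circ.one = Br.dot.one := by
  set u := Br.circ.one with hu_def
  have hu : comul (R := R) u = u ⊗ₜ[R] u := Br.circ.comul_one
  have hone : ∀ a, Br.circ.mul u a = a := Br.circ.one_mul
  have hcu : counit (R := R) u = 1 := Br.circ.counit_one
  have hS : Br.dot.S u = Br.dot.one := by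
    have h := Br.compat' u Br.dot.one Br.dot.one (singletonRepr u hu)
      (fun _ => singletonRepr u hu)
    simp only [singletonRepr, Finset.sum_singleton, hone, Br.dot.mul_one,
      Br.dot.one_mul] at h
    simpa [Br.dot.mul_one, Br.dot.one_mul] using h.symm
  have h2 := Br.dot.S_mul_right' u (singletonRepr u hu)
  simp only [singletonRepr, Finset.sum_singleton, hS, Br.dot.mul_one,
    hcu, one_smul] at h2
  exact h2

variable (Br : HopfBrace R H)

/-- Bilinear convolution product on `H →ₗ[R] H` induced by the `dot` multiplication. -/
noncomputable def convMul : (H →ₗ[R] H) →ₗ[R] (H →ₗ[R] H) →ₗ[R] (H →ₗ[R] H) :=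
  LinearMap.mk₂ R (fun f g => conv Br.dot.mul f g)
    (fun f f' g => by
      ext x; simp [conv, TensorProduct.map_add_left])
    (fun c f g => by
      ext x; simp [conv, TensorProduct.map_smul_left])
    (fun f g g' => by
      ext x; simp [conv, TensorProduct.map_add_right])
    (fun c f g => by
      ext x; simp [conv, TensorProduct.map_smul_right])

@[simp] lemma convMul_apply (f g : H →ₗ[R] H) : convMul Br f g = conv Br.dot.mul f g := rfl

/-- `g ↦ (h ↦ S(g ∘ h))`. -/
noncomputable def SMhat : H →ₗ[R] (H →ₗ[R] H) :=
  LinearMap.llcomp R H H H Br.dot.S ∘ₗ Br.circ.mul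

@[simp] lemma SMhat_apply (g h : H) : SMhat Br g h = Br.dot.S (Br.circ.mul g h) := rfl

/-- `g ↦ (h ↦ ε(h) • g)`. -/
noncomputable def Nhat : H →ₗ[R] (H →ₗ[R] H) :=
  LinearMap.mk₂ R (fun g h => counit (R := R) h • g)
    (fun g g' h => smul_add _ _ _)
    (fun c g h => smul_comm _ _ _)
    (fun g h h' => by show counit (R := R) (h + h') • g = _; rw [map_add, add_smul])
    (fun c g h => by show counit (R := R) (c • h) • g = _; rw [map_smul, smul_eq_mul, mul_smul])

@[simp] lemma Nhat_apply (g h : H) : Nhat (R := R) (H := H) g h = counit (R := R) h • g := rfl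

/-- The trilinear map `(a, b, h) ↦ S(a)·(b ∘ S(h))`. -/
noncomputable def Psi : H →ₗ[R] H →ₗ[R] (H →ₗ[R] H) :=
  LinearMap.mk₂ R (fun a b => Br.dot.mul (Br.dot.S a) ∘ₗ Br.circ.mul b ∘ₗ Br.dot.S)
    (fun a a' b => by ext h; simp)
    (fun c a b => by ext h; simp)
    (fun a b b' => by ext h; simp)
    (fun c a b => by ext h; simp)

@[simp] lemma Psi_apply (a b h : H) :
    Psi Br a b h = Br.dot.mul (Br.dot.S a) (Br.circ.mul b (Br.dot.S h)) := rfl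

/-- `g ↦ (h ↦ ∑ S(g₁)·(g₂ ∘ S(h)))`. -/
noncomputable def Bhat : H →ₗ[R] (H →ₗ[R] H) :=
  TensorProduct.lift (Psi Br) ∘ₗ comul

lemma Bhat_apply (x : H) {ι : Type*} (rep : Coalgebra.Repr R x ι) :
    Bhat Br x = ∑ i ∈ rep.index, Psi Br (rep.left i) (rep.right i) :=
  sweedler_apply (Psi Br) x rep

/-- `S ∘ M` is a left convolution inverse of `M`. -/
lemma SM_conv_M : conv (convMul Br) (SMhat Br) Br.circ.mul =
    (counit (R := R)).smulRight ((counit (R := R)).smulRight Br.dot.one) := by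
  ext g h
  rw [conv_apply _ _ _ g (ℛ R g)]
  set rg := ℛ R g
  simp only [LinearMap.coe_sum, Finset.sum_apply, convMul_apply]
  have step : ∀ i, conv Br.dot.mul (SMhat Br (rg.left i)) (Br.circ.mul (rg.right i)) h =
      ∑ j ∈ (ℛ R h).index, Br.dot.mul (Br.dot.S (Br.circ.mul (rg.left i) ((ℛ R h).left j)))
        (Br.circ.mul (rg.right i) ((ℛ R h).right j)) := by
    intro i
    rw [conv_apply _ _ _ h (ℛ R h)]
    simp
  rw [Finset.sum_congr rfl fun i _ => step i]
  have key := Br.dot.S_mul_left' (Br.circ.mul g h) (mulRepr Br.circ g h (ℛ R g) (ℛ R h))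
  simp only [mulRepr, Finset.sum_product] at key
  rw [key, Br.circ.counit_mul]
  simp only [LinearMap.smulRight_apply, LinearMap.smul_apply, smul_smul]

/-- The key computation: `M ⋆ B = N`, using the Hopf brace compatibility. -/
lemma M_conv_B : conv (convMul Br) Br.circ.mul (Bhat Br) = Nhat := by
  ext g h
  rw [conv_apply _ _ _ g (ℛ R g)]
  set rg := ℛ R g with hrg
  simp only [LinearMap.coe_sum, Finset.sum_apply, convMul_apply]
  have step1 : ∀ i, conv Br.dot.mul (Br.circ.mul (rg.left i)) (Bhat Br (rg.right i)) h =
      ∑ j ∈ (ℛ R h).index, ∑ k ∈ (ℛ R (rg.right i)).index,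
        Br.dot.mul (Br.circ.mul (rg.left i) ((ℛ R h).left j))
          (Br.dot.mul (Br.dot.S ((ℛ R (rg.right i)).left k))
            (Br.circ.mul ((ℛ R (rg.right i)).right k) (Br.dot.S ((ℛ R h).right j)))) := by
    intro i
    rw [conv_apply _ _ _ h (ℛ R h)]
    refine Finset.sum_congr rfl fun j _ => ?_
    rw [Bhat_apply Br (rg.right i) (ℛ R (rg.right i))]
    simp [Finset.mul_sum, map_sum]
  rw [Finset.sum_congr rfl fun i _ => step1 i]
  rw [Finset.sum_comm]
  have step2 : ∀ j ∈ (ℛ R h).index, (∑ i ∈ rg.index, ∑ k ∈ (ℛ R (rg.right i)).index,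
      Br.dot.mul (Br.circ.mul (rg.left i) ((ℛ R h).left j))
        (Br.dot.mul (Br.dot.S ((ℛ R (rg.right i)).left k))
          (Br.circ.mul ((ℛ R (rg.right i)).right k) (Br.dot.S ((ℛ R h).right j))))) =
      Br.circ.mul g (Br.dot.mul ((ℛ R h).left j) (Br.dot.S ((ℛ R h).right j))) := by
    intro j _
    rw [Br.compat' g ((ℛ R h).left j) (Br.dot.S ((ℛ R h).right j)) rg
      (fun i => ℛ R (rg.right i))]
    exact Finset.sum_congr rfl fun i _ => Finset.sum_congr rfl fun k _ =>
      (Br.dot.mul_assoc _ _ _).symm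
  rw [Finset.sum_congr rfl step2]
  rw [← map_sum (Br.circ.mul g), Br.dot.S_mul_right' h (ℛ R h)]
  simp [hopfBrace_one_eq Br ▸ Br.circ.mul_one g]

/-- Evaluation of `SM ⋆ N` gives the LHS of the theorem. -/
lemma A_eval (g h : H) {ι : Type*} (r : Coalgebra.Repr R g ι) :
    conv (convMul Br) (SMhat Br) Nhat g h =
      ∑ i ∈ r.index, Br.dot.mul (Br.dot.S (Br.circ.mul (r.left i) h)) (r.right i) := by
  rw [conv_apply _ _ _ g r]
  simp only [LinearMap.coe_sum, Finset.sum_apply, convMul_apply]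
  refine Finset.sum_congr rfl fun i _ => ?_
  rw [conv_apply _ _ _ h (ℛ R h)]
  simp only [SMhat_apply, Nhat_apply, map_smul, LinearMap.smul_apply]
  have := collapse_right (S := R)
    ((Br.dot.mul.flip (r.right i)) ∘ₗ Br.dot.S ∘ₗ (Br.circ.mul (r.left i)))
    h (ℛ R h)
  simpa using this

theorem main_identity : conv (convMul Br) (SMhat Br) Nhat = Bhat Br := by
  have hunit : ∀ F : H →ₗ[R] (H →ₗ[R] H),
      conv (convMul Br) ((counit (R := R)).smulRight
        ((counit (R := R)).smulRight Br.dot.one)) F = F := by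
    intro F
    exact conv_unit_left (convMul Br) _
      (fun f => conv_unit_left Br.dot.mul Br.dot.one Br.dot.one_mul f) F
  calc conv (convMul Br) (SMhat Br) Nhat
      = conv (convMul Br) (SMhat Br) (conv (convMul Br) Br.circ.mul (Bhat Br)) := by
        rw [M_conv_B]
    _ = conv (convMul Br) (conv (convMul Br) (SMhat Br) Br.circ.mul) (Bhat Br) := by
        rw [conv_assoc (convMul Br)
          (fun a b c => conv_assoc Br.dot.mul Br.dot.mul_assoc a b c)]
    _ = Bhat Br := by rw [SM_conv_M]; exact hunit _

end BraceLemmas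

/-- In a Hopf brace, `S(g₍₁₎∘h)·g₍₂₎ = S(g₍₁₎)·(g₍₂₎∘S(h))`. -/
theorem hopfBrace_antipode_identity (Br : HopfBrace R H) (g h : H)
    {ι : Type*} (r : Coalgebra.Repr R g ι) :
    ∑ i ∈ r.index, Br.dot.mul (Br.dot.S (Br.circ.mul (r.left i) h)) (r.right i) =
      ∑ i ∈ r.index, Br.dot.mul (Br.dot.S (r.left i))
        (Br.circ.mul (r.right i) (Br.dot.S h)) := by
  rw [← A_eval Br g h r, main_identity Br]
  rw [Bhat_apply Br g r]
  simp
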